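/- Let g, h : ℕ → ℕ satisfy g(N)+h(N) → ∞ and (g(N)+h(N))/N → 0, and let z(N) = 2N/(g(N)+h(N)). Define R_N^{(s,o)}(x) = Σ_{k=1}^{⌊(x·z(N)+1)/2⌋} ⟨P_{2k-1}^{(s)}⟩, where ⟨P_{2k-1}^{(s)}⟩ = (gh(2k-1)/(N(N-2k+2))) · Π_{j=0}^{k-2}(1-(g-1)/(N-(2j+1)))(1-h/(N-2j)). Then for every x ≥ 0, R_N^{(s,o)}(x) ~ (2gh/(g+h)²)·(1 - e^{-x}(1+x)) as N → ∞. -/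

import Mathlib

open Filter
set_option maxHeartbeats 1000000

/-- `R_N^{(s,o)}(x) = Σ_{k=1}^{⌊(xz+1)/2⌋} ⟨P_{2k-1}^{(s)}⟩`, the expected fraction of
the space on symmetric cycles of odd period at most `x·z(N)`. -/
noncomputable def RsoN (g h : ℕ → ℕ) (x : ℝ) (N : ℕ) : ℝ :=
  ∑ k ∈ Finset.range ⌊(x * (2 * (N : ℝ) / (g N + h N : ℝ)) + 1) / 2⌋₊,
    ((g N : ℝ) * (h N : ℝ) * (2 * ((k : ℝ) + 1) - 1)) /
        ((N : ℝ) * ((N : ℝ) - 2 * ((k : ℝ) + 1) + 2)) *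
      ∏ j ∈ Finset.range k,
        (1 - ((g N : ℝ) - 1) / ((N : ℝ) - (2 * j + 1))) *
          (1 - (h N : ℝ) / ((N : ℝ) - 2 * j))

lemma sum_odd_geom (q : ℝ) (K : ℕ) :
    (∑ k ∈ Finset.range K, (2 * (k : ℝ) + 1) * q ^ k) * (1 - q) ^ 2
      = (1 + q) * (1 - q ^ K) - 2 * K * q ^ K * (1 - q) := by
  induction K with
  | zero => simp
  | succ n ih =>
    rw [Finset.sum_range_succ, add_mul, ih]
    push_cast
    ring

lemma tendsto_slope_comp {f : ℝ → ℝ} {f' : ℝ} (hf : HasDerivAt f f' 0) (hf0 : f 0 = 0)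
    {c : ℕ → ℝ} (hc : Tendsto c atTop (nhds 0)) (hc0 : ∀ᶠ n in atTop, c n ≠ 0) :
    Tendsto (fun n => f (c n) / c n) atTop (nhds f') := by
  have h := hasDerivAt_iff_tendsto_slope.mp hf
  have hcc : Tendsto c atTop (nhdsWithin 0 {(0:ℝ)}ᶜ) :=
    tendsto_nhdsWithin_iff.mpr ⟨hc, hc0.mono fun n hn => hn⟩
  refine (h.comp hcc).congr' ?_
  filter_upwards with n
  simp [slope_def_field, hf0]

lemma lim_one_sub_exp {c : ℕ → ℝ} (hc : Tendsto c atTop (nhds 0))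
    (hc0 : ∀ᶠ n in atTop, c n ≠ 0) :
    Tendsto (fun n => (1 - Real.exp (-c n)) / c n) atTop (nhds 1) := by
  have hd : HasDerivAt (fun t : ℝ => 1 - Real.exp (-t)) 1 0 := by
    have h1 : HasDerivAt (fun t : ℝ => Real.exp (-t)) (Real.exp (-0) * (-1)) 0 :=
      (hasDerivAt_neg 0).exp
    have := h1.const_sub 1
    norm_num at this ⊢
    exact this
  exact tendsto_slope_comp hd (by norm_num) hc hc0

lemma lim_neg_log {c : ℕ → ℝ} (hc : Tendsto c atTop (nhds 0))
    (hc0 : ∀ᶠ n in atTop, c n ≠ 0) :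
    Tendsto (fun n => -Real.log (1 - c n) / c n) atTop (nhds 1) := by
  have hd : HasDerivAt (fun t : ℝ => -Real.log (1 - t)) 1 0 := by
    have h1 : HasDerivAt (fun t : ℝ => (1 - t : ℝ)) (-1) 0 := by
      simpa using (hasDerivAt_id (0:ℝ)).const_sub 1
    have h2 := (h1.log (by norm_num)).neg
    norm_num at h2 ⊢
    exact h2
  exact tendsto_slope_comp hd (by norm_num) hc hc0

lemma exp_le_one_sub {ε u : ℝ} (hε0 : 0 < ε) (hε1 : ε < 1) (hu0 : 0 ≤ u) (huε : u ≤ ε) :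
    Real.exp (-(-Real.log (1 - ε) / ε) * u) ≤ 1 - u := by
  have h1u : 0 < 1 - u := by linarith
  have h1e : 0 < 1 - ε := by linarith
  rw [← Real.exp_log h1u]
  apply Real.exp_le_exp.mpr
  have hconc := strictConcaveOn_log_Ioi.concaveOn.2 (Set.mem_Ioi.mpr one_pos)
      (Set.mem_Ioi.mpr h1e)
      (show (0:ℝ) ≤ 1 - u/ε by rw [sub_nonneg]; exact div_le_one_of_le₀ huε hε0.le)
      (show (0:ℝ) ≤ u/ε by positivity) (by ring)
  have harg : (1 - u/ε) • (1:ℝ) + (u/ε) • (1 - ε) = 1 - u := by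
    simp only [smul_eq_mul, mul_one]; rw [mul_sub, mul_one, div_mul_cancel₀ u hε0.ne']; ring
  rw [harg] at hconc
  calc -(-Real.log (1 - ε) / ε) * u = (1 - u/ε) • Real.log 1 + (u/ε) • Real.log (1 - ε) := by
        simp [Real.log_one, smul_eq_mul]; field_simp
    _ ≤ Real.log (1 - u) := hconc

lemma coreA (x : ℝ) (K : ℕ → ℕ) (c : ℕ → ℝ)
    (hc0 : ∀ᶠ N in atTop, 0 < c N) (hc : Tendsto c atTop (nhds 0))
    (hK : Tendsto (fun N => c N * (K N : ℝ)) atTop (nhds x)) :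
    Tendsto (fun N => c N ^ 2 * ∑ k ∈ Finset.range (K N), (2*(k:ℝ)+1) * Real.exp (-c N) ^ k)
      atTop (nhds (2 * (1 - Real.exp (-x) * (1 + x)))) := by
  have hq : Tendsto (fun N => Real.exp (-c N)) atTop (nhds 1) := by
    have h0 : Tendsto (fun n => -c n) atTop (nhds 0) := by simpa using hc.neg
    have := (Real.continuous_exp.tendsto 0).comp h0; simp only [Real.exp_zero] at this; exact this
  have hqK : Tendsto (fun N => Real.exp (-c N) ^ (K N)) atTop (nhds (Real.exp (-x))) := by
    have h1 : (fun N => Real.exp (-c N) ^ (K N)) = fun N => Real.exp (-(c N * K N)) := by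
      funext N
      rw [← Real.exp_nat_mul]
      ring_nf
    rw [h1]
    exact (Real.continuous_exp.tendsto _).comp hK.neg
  have hdiv : Tendsto (fun N => (1 - Real.exp (-c N)) / c N) atTop (nhds 1) :=
    lim_one_sub_exp hc (hc0.mono fun n hn => ne_of_gt hn)
  have hF : Tendsto (fun N => ((1 + Real.exp (-c N)) * (1 - Real.exp (-c N) ^ K N)
        - 2 * (c N * K N) * Real.exp (-c N) ^ K N * ((1 - Real.exp (-c N)) / c N))
        * (((1 - Real.exp (-c N)) / c N)⁻¹) ^ 2)
      atTop (nhds (((1 + 1) * (1 - Real.exp (-x))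
        - 2 * x * Real.exp (-x) * 1) * ((1:ℝ)⁻¹) ^ 2)) := by
    exact (((Tendsto.const_add 1 hq).mul (Tendsto.const_sub 1 hqK)).sub
      ((((hK.const_mul 2)).mul hqK).mul hdiv)).mul ((hdiv.inv₀ one_ne_zero).pow 2)
  have heq : ∀ᶠ N in atTop, ((1 + Real.exp (-c N)) * (1 - Real.exp (-c N) ^ K N)
        - 2 * (c N * K N) * Real.exp (-c N) ^ K N * ((1 - Real.exp (-c N)) / c N))
        * (((1 - Real.exp (-c N)) / c N)⁻¹) ^ 2
      = c N ^ 2 * ∑ k ∈ Finset.range (K N), (2*(k:ℝ)+1) * Real.exp (-c N) ^ k := by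
    filter_upwards [hc0] with N hcN
    set q := Real.exp (-c N) with hqdef
    have hq1 : q < 1 := by
      rw [hqdef]
      exact Real.exp_lt_one_iff.mpr (by linarith)
    have h1q : (1 : ℝ) - q ≠ 0 := by linarith
    have hcne : c N ≠ 0 := ne_of_gt hcN
    have hB := sum_odd_geom q (K N)
    have hS : (∑ k ∈ Finset.range (K N), (2*(k:ℝ)+1) * q ^ k)
        = ((1 + q) * (1 - q ^ K N) - 2 * (K N) * q ^ K N * (1 - q)) / (1 - q)^2 := by
      rw [eq_div_iff (pow_ne_zero 2 h1q)]; exact hB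
    rw [hS]
    field_simp
  have := hF.congr' heq
  convert this using 2
  ring

noncomputable def sf (g h : ℕ → ℕ) (N : ℕ) : ℝ := (g N : ℝ) + (h N : ℝ)
noncomputable def zf (g h : ℕ → ℕ) (N : ℕ) : ℝ := 2 * (N : ℝ) / sf g h N
noncomputable def Kf (g h : ℕ → ℕ) (x : ℝ) (N : ℕ) : ℕ := ⌊(x * zf g h N + 1) / 2⌋₊
noncomputable def epsf (g h : ℕ → ℕ) (x : ℝ) (N : ℕ) : ℝ :=
  sf g h N / ((N : ℝ) - 2 * Kf g h x N)
noncomputable def lamf (g h : ℕ → ℕ) (x : ℝ) (N : ℕ) : ℝ :=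
  -Real.log (1 - epsf g h x N) / epsf g h x N

lemma RsoN_eq (g h : ℕ → ℕ) (x : ℝ) (N : ℕ) :
    RsoN g h x N = ∑ k ∈ Finset.range (Kf g h x N),
      ((g N : ℝ) * (h N : ℝ) * (2 * (k : ℝ) + 1)) / ((N : ℝ) * ((N : ℝ) - 2 * k)) *
        ∏ j ∈ Finset.range k,
          (1 - ((g N : ℝ) - 1) / ((N : ℝ) - (2 * j + 1))) *
            (1 - (h N : ℝ) / ((N : ℝ) - 2 * j)) := by
  unfold RsoN Kf zf sf
  refine Finset.sum_congr rfl fun k _ => ?_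
  congr 1
  ring

lemma sum_bounds (g h : ℕ → ℕ) (hg : ∀ N, 1 ≤ g N) (hh : ∀ N, 1 ≤ h N) (x : ℝ) (N : ℕ)
    (hKn : (2 * (Kf g h x N : ℝ) + 2) ≤ N) (hEps : epsf g h x N ≤ 1 / 2) :
    ((g N : ℝ) * h N / (N : ℝ) ^ 2) * (∑ k ∈ Finset.range (Kf g h x N),
        (2 * (k : ℝ) + 1) *
          Real.exp (-(lamf g h x N * ((sf g h N - 1) / ((N : ℝ) - 2 * Kf g h x N)))) ^ k)
      ≤ (∑ k ∈ Finset.range (Kf g h x N),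
      ((g N : ℝ) * (h N : ℝ) * (2 * (k : ℝ) + 1)) / ((N : ℝ) * ((N : ℝ) - 2 * k)) *
        ∏ j ∈ Finset.range k,
          (1 - ((g N : ℝ) - 1) / ((N : ℝ) - (2 * j + 1))) *
            (1 - (h N : ℝ) / ((N : ℝ) - 2 * j)))
    ∧ (∑ k ∈ Finset.range (Kf g h x N),
      ((g N : ℝ) * (h N : ℝ) * (2 * (k : ℝ) + 1)) / ((N : ℝ) * ((N : ℝ) - 2 * k)) *
        ∏ j ∈ Finset.range k,
          (1 - ((g N : ℝ) - 1) / ((N : ℝ) - (2 * j + 1))) *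
            (1 - (h N : ℝ) / ((N : ℝ) - 2 * j)))
      ≤ ((g N : ℝ) * h N / (N : ℝ) ^ 2) * ((N : ℝ) / ((N : ℝ) - 2 * Kf g h x N)) *
        (∑ k ∈ Finset.range (Kf g h x N),
          (2 * (k : ℝ) + 1) * Real.exp (-((sf g h N - 1) / (N : ℝ))) ^ k) := by
  set n := (N : ℝ)
  set G := (g N : ℝ) with hGdef
  set H := (h N : ℝ) with hHdef
  set Kn := Kf g h x N with hKdef
  set ε := epsf g h x N with hεdef
  set lam := lamf g h x N with hlamdef
  have hG1 : 1 ≤ G := by rw [hGdef]; exact_mod_cast hg N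
  have hH1 : 1 ≤ H := by rw [hHdef]; exact_mod_cast hh N
  have hS : sf g h N = G + H := rfl
  have hKpos : (0:ℝ) ≤ 2 * Kn := by positivity
  have hn2 : (2:ℝ) ≤ n - 2 * Kn := by linarith
  have hnK : (0:ℝ) < n - 2 * Kn := by linarith
  have hn0 : (0:ℝ) < n := by linarith
  have hε0 : 0 < ε := by
    rw [hεdef]; unfold epsf
    exact div_pos (by rw [hS]; linarith) hnK
  have hε1 : ε < 1 := lt_of_le_of_lt hEps (by norm_num)
  have hlam0 : 0 ≤ lam := by
    rw [hlamdef]; unfold lamf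
    rw [← hεdef]
    have : Real.log (1 - ε) ≤ 0 := Real.log_nonpos (by linarith) (by linarith)
    have := neg_nonneg.mpr this
    positivity
  -- per-j facts
  have hfacts : ∀ k ∈ Finset.range Kn, ∀ j ∈ Finset.range k,
      (0:ℝ) < n - (2 * j + 1) ∧ (0:ℝ) < n - 2 * j ∧
      ((G - 1) / (n - (2 * j + 1)) ≤ (G - 1) / (n - 2 * Kn)) ∧
      (H / (n - 2 * j) ≤ H / (n - 2 * Kn)) ∧
      (G - 1) / (n - (2 * j + 1)) ≤ ε ∧ H / (n - 2 * j) ≤ ε ∧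
      0 ≤ (G - 1) / (n - (2 * j + 1)) ∧ 0 ≤ H / (n - 2 * j) := by
    intro k hk j hj
    have hk' : k < Kn := Finset.mem_range.mp hk
    have hj' : j < k := Finset.mem_range.mp hj
    have hjK : (2 * (j:ℝ) + 1) ≤ 2 * Kn := by
      have : (j:ℝ) + 1 ≤ Kn := by exact_mod_cast Nat.succ_le_of_lt (hj'.trans hk')
      linarith
    have h1 : (0:ℝ) < n - (2 * j + 1) := by linarith
    have h2 : (0:ℝ) < n - 2 * j := by linarith
    have h3 : (G - 1) / (n - (2 * j + 1)) ≤ (G - 1) / (n - 2 * Kn) := by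
      apply div_le_div_of_nonneg_left (by linarith) hnK (by linarith)
    have h4 : H / (n - 2 * j) ≤ H / (n - 2 * Kn) := by
      apply div_le_div_of_nonneg_left (by linarith) hnK (by linarith)
    have hεeq : ε = (G + H) / (n - 2 * Kn) := by rw [hεdef]; unfold epsf; rw [hS]
    have h5 : (G - 1) / (n - (2 * j + 1)) ≤ ε := by
      rw [hεeq]; exact div_le_div₀ (by linarith) (by linarith) hnK (by linarith)
    have h6 : H / (n - 2 * j) ≤ ε := by
      rw [hεeq]; exact div_le_div₀ (by linarith) (by linarith) hnK (by linarith)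
    exact ⟨h1, h2, h3, h4, h5, h6, div_nonneg (by linarith) h1.le, div_nonneg (by linarith) h2.le⟩
  constructor
  · -- lower bound
    rw [Finset.mul_sum]
    apply Finset.sum_le_sum
    intro k hk
    have hk' : k < Kn := Finset.mem_range.mp hk
    have hkK : (k:ℝ) ≤ Kn := by exact_mod_cast hk'.le
    have hnk : (0:ℝ) < n - 2 * k := by linarith
    -- product lower bound
    have hP : Real.exp (-(lam * ((sf g h N - 1) / (n - 2 * Kn)))) ^ k
        ≤ ∏ j ∈ Finset.range k,
          (1 - (G - 1) / (n - (2 * j + 1))) * (1 - H / (n - 2 * j)) := by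
      calc Real.exp (-(lam * ((sf g h N - 1) / (n - 2 * Kn)))) ^ k
          = ∏ _j ∈ Finset.range k, Real.exp (-(lam * ((sf g h N - 1) / (n - 2 * Kn)))) := by
            rw [Finset.prod_const, Finset.card_range]
        _ ≤ _ := ?_
      apply Finset.prod_le_prod
      · intro j _; positivity
      · intro j hj
        obtain ⟨h1, h2, h3, h4, h5, h6, h7, h8⟩ := hfacts k hk j hj
        have e1 : Real.exp (-(-Real.log (1 - ε) / ε) * ((G - 1) / (n - (2 * j + 1))))
            ≤ 1 - (G - 1) / (n - (2 * j + 1)) := exp_le_one_sub hε0 hε1 h7 h5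
        have e2 : Real.exp (-(-Real.log (1 - ε) / ε) * (H / (n - 2 * j)))
            ≤ 1 - H / (n - 2 * j) := exp_le_one_sub hε0 hε1 h8 h6
        have hlameq : lam = -Real.log (1 - ε) / ε := by rw [hlamdef, hεdef]; rfl
        calc Real.exp (-(lam * ((sf g h N - 1) / (n - 2 * Kn))))
            ≤ Real.exp (-(lam * ((G - 1) / (n - (2 * j + 1)) + H / (n - 2 * j)))) := by
              apply Real.exp_le_exp.mpr
              rw [neg_le_neg_iff]
              apply mul_le_mul_of_nonneg_left ?_ hlam0
              rw [hS]
              have heq2 : (G + H - 1) / (n - 2 * Kn)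
                  = (G - 1) / (n - 2 * Kn) + H / (n - 2 * Kn) := by ring
              rw [heq2]
              exact add_le_add h3 h4
          _ = Real.exp (-(-Real.log (1 - ε) / ε) * ((G - 1) / (n - (2 * j + 1))))
              * Real.exp (-(-Real.log (1 - ε) / ε) * (H / (n - 2 * j))) := by
              rw [← Real.exp_add, hlameq]; congr 1; ring
          _ ≤ (1 - (G - 1) / (n - (2 * j + 1))) * (1 - H / (n - 2 * j)) := by
              apply mul_le_mul e1 e2 (Real.exp_pos _).le (by linarith)
    -- scalar comparison
    have hscal : G * H / n ^ 2 * (2 * (k:ℝ) + 1) ≤ G * H * (2 * (k:ℝ) + 1) / (n * (n - 2 * k)) := by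
      rw [div_mul_eq_mul_div, div_le_div_iff₀ (by positivity) (by nlinarith)]
      have hle : n * (n - 2 * k) ≤ n ^ 2 := by nlinarith
      exact mul_le_mul_of_nonneg_left hle (by positivity)
    calc G * H / n ^ 2 * ((2 * (k:ℝ) + 1) * Real.exp (-(lam * ((sf g h N - 1) / (n - 2 * Kn)))) ^ k)
        = (G * H / n ^ 2 * (2 * (k:ℝ) + 1)) * Real.exp (-(lam * ((sf g h N - 1) / (n - 2 * Kn)))) ^ k := by
          ring
      _ ≤ (G * H * (2 * (k:ℝ) + 1) / (n * (n - 2 * k)))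
            * Real.exp (-(lam * ((sf g h N - 1) / (n - 2 * Kn)))) ^ k :=
          mul_le_mul_of_nonneg_right hscal (by positivity)
      _ ≤ (G * H * (2 * (k:ℝ) + 1) / (n * (n - 2 * k)))
            * ∏ j ∈ Finset.range k, (1 - (G - 1) / (n - (2 * j + 1))) * (1 - H / (n - 2 * j)) :=
          mul_le_mul_of_nonneg_left hP
            (div_nonneg (by positivity) (mul_pos hn0 hnk).le)
  · -- upper bound
    rw [Finset.mul_sum]
    apply Finset.sum_le_sum
    intro k hk
    have hk' : k < Kn := Finset.mem_range.mp hk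
    have hkK : (k:ℝ) ≤ Kn := by exact_mod_cast hk'.le
    have hnk : (0:ℝ) < n - 2 * k := by linarith
    have hPpos : (0:ℝ) ≤ ∏ j ∈ Finset.range k,
        (1 - (G - 1) / (n - (2 * j + 1))) * (1 - H / (n - 2 * j)) := by
      apply Finset.prod_nonneg
      intro j hj
      obtain ⟨h1, h2, h3, h4, h5, h6, h7, h8⟩ := hfacts k hk j hj
      exact mul_nonneg (by linarith) (by linarith)
    have hP : (∏ j ∈ Finset.range k,
        (1 - (G - 1) / (n - (2 * j + 1))) * (1 - H / (n - 2 * j)))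
        ≤ Real.exp (-((sf g h N - 1) / n)) ^ k := by
      calc (∏ j ∈ Finset.range k,
          (1 - (G - 1) / (n - (2 * j + 1))) * (1 - H / (n - 2 * j)))
          ≤ ∏ _j ∈ Finset.range k, Real.exp (-((sf g h N - 1) / n)) := ?_
        _ = Real.exp (-((sf g h N - 1) / n)) ^ k := by
            rw [Finset.prod_const, Finset.card_range]
      apply Finset.prod_le_prod
      · intro j hj
        obtain ⟨h1, h2, h3, h4, h5, h6, h7, h8⟩ := hfacts k hk j hj
        exact mul_nonneg (by linarith) (by linarith)
      · intro j hj
        obtain ⟨h1, h2, h3, h4, h5, h6, h7, h8⟩ := hfacts k hk j hj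
        have hu1 : (G - 1) / n ≤ (G - 1) / (n - (2 * j + 1)) :=
          div_le_div_of_nonneg_left (by linarith) h1 (by linarith)
        have hu2 : H / n ≤ H / (n - 2 * j) :=
          div_le_div_of_nonneg_left (by linarith) h2 (by linarith)
        have b1 : 1 - (G - 1) / (n - (2 * j + 1)) ≤ Real.exp (-((G - 1) / n)) := by
          have := Real.add_one_le_exp (-((G - 1) / n))
          linarith
        have b2 : 1 - H / (n - 2 * j) ≤ Real.exp (-(H / n)) := by
          have := Real.add_one_le_exp (-(H / n))
          linarith
        calc (1 - (G - 1) / (n - (2 * j + 1))) * (1 - H / (n - 2 * j))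
            ≤ Real.exp (-((G - 1) / n)) * Real.exp (-(H / n)) := by
              apply mul_le_mul b1 b2 (by linarith [hε1, h6]) (Real.exp_pos _).le
          _ = Real.exp (-((sf g h N - 1) / n)) := by
              rw [← Real.exp_add, hS]; congr 1; ring
    have hscal : G * H * (2 * (k:ℝ) + 1) / (n * (n - 2 * k))
        ≤ G * H / n ^ 2 * (n / (n - 2 * Kn)) * (2 * (k:ℝ) + 1) := by
      have heq : G * H / n ^ 2 * (n / (n - 2 * Kn)) * (2 * (k:ℝ) + 1)
          = G * H * (2 * (k:ℝ) + 1) / (n * (n - 2 * Kn)) := by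
        field_simp
      rw [heq]
      apply div_le_div_of_nonneg_left (by positivity) (mul_pos hn0 hnK) ?_
      nlinarith
    calc (G * H * (2 * (k:ℝ) + 1)) / (n * (n - 2 * k)) *
          ∏ j ∈ Finset.range k, (1 - (G - 1) / (n - (2 * j + 1))) * (1 - H / (n - 2 * j))
        ≤ (G * H / n ^ 2 * (n / (n - 2 * Kn)) * (2 * (k:ℝ) + 1)) *
            Real.exp (-((sf g h N - 1) / n)) ^ k :=
          mul_le_mul hscal hP hPpos
            (by
              have h9 : (0:ℝ) ≤ n / (n - 2 * Kn) := div_nonneg hn0.le hnK.le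
              positivity)
      _ = G * H / n ^ 2 * (n / (n - 2 * Kn)) *
            ((2 * (k:ℝ) + 1) * Real.exp (-((sf g h N - 1) / n)) ^ k) := by ring

/-- For every `x ≥ 0`, `R_N^{(s,o)}(x) ~ (2gh/(g+h)²)·(1 - e^{-x}(1+x))` as `N → ∞`
(at `x = 0` both sides are `0`). -/

theorem symmetric_odd_distribution_asymptotics (g h : ℕ → ℕ)
    (hg : ∀ N, 1 ≤ g N) (hh : ∀ N, 1 ≤ h N)
    (h1 : Tendsto (fun N : ℕ => (g N + h N : ℝ)) atTop atTop)
    (h2 : Tendsto (fun N : ℕ => (g N + h N : ℝ) / N) atTop (nhds 0))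
    (x : ℝ) (hx : 0 ≤ x) :
    (x = 0 → ∀ N, RsoN g h x N = 0) ∧
    (0 < x →
      Tendsto
        (fun N : ℕ =>
          RsoN g h x N /
            ((2 * (g N : ℝ) * (h N : ℝ) / ((g N : ℝ) + (h N : ℝ)) ^ 2) *
              (1 - Real.exp (-x) * (1 + x))))
        atTop (nhds 1)) := by
  constructor
  · intro hx0 N
    subst hx0
    unfold RsoN
    rw [show ((0:ℝ) * (2 * (N:ℝ) / ((g N : ℝ) + (h N : ℝ))) + 1) / 2 = 1/2 by ring]
    rw [show ⌊(1/2 : ℝ)⌋₊ = 0 from Nat.floor_eq_zero.mpr (by norm_num)]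
    simp
  · intro hx0
    have hgN : ∀ N, (1:ℝ) ≤ (g N : ℝ) := fun N => Nat.one_le_cast.mpr (hg N)
    have hhN : ∀ N, (1:ℝ) ≤ (h N : ℝ) := fun N => Nat.one_le_cast.mpr (hh N)
    have hs2 : ∀ N, (2:ℝ) ≤ sf g h N := fun N => by
      have := hgN N; have := hhN N; unfold sf; linarith
    have hs0 : ∀ N, (0:ℝ) < sf g h N := fun N => lt_of_lt_of_le two_pos (hs2 N)
    have h1' : Tendsto (sf g h) atTop atTop := h1
    have h2' : Tendsto (fun N => sf g h N / N) atTop (nhds 0) := h2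
    have hzpos : ∀ N, 1 ≤ N → (0:ℝ) < zf g h N := fun N hN => by
      unfold zf
      have : (0:ℝ) < N := by exact_mod_cast hN
      exact div_pos (by linarith) (hs0 N)
    -- z → ∞
    have hz : Tendsto (zf g h) atTop atTop := by
      have hpos : ∀ᶠ N in atTop, sf g h N / N ∈ Set.Ioi (0:ℝ) := by
        filter_upwards [eventually_ge_atTop 1] with N hN
        have : (0:ℝ) < N := by exact_mod_cast hN
        exact Set.mem_Ioi.mpr (div_pos (hs0 N) this)
      have h3 := tendsto_inv_nhdsGT_zero.comp (tendsto_nhdsWithin_iff.mpr ⟨h2', hpos⟩)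
      have h4 := h3.const_mul_atTop two_pos
      refine h4.congr fun N => ?_
      show 2 * ((sf g h N / N)⁻¹) = zf g h N
      unfold zf
      rw [inv_div, mul_div_assoc]
    have hzinv : Tendsto (fun N => 1 / zf g h N) atTop (nhds 0) := by
      have := hz.inv_tendsto_atTop; simp only [one_div]; exact this
    -- 2K/z → x
    have hKz : Tendsto (fun N => 2 * (Kf g h x N : ℝ) / zf g h N) atTop (nhds x) := by
      have hlow : ∀ᶠ N in atTop,
          x - 1 / zf g h N ≤ 2 * (Kf g h x N : ℝ) / zf g h N := by
        filter_upwards [eventually_ge_atTop 1] with N hN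
        have hzp := hzpos N hN
        have hK : (x * zf g h N + 1) / 2 < (Kf g h x N : ℝ) + 1 := by
          unfold Kf; exact Nat.lt_floor_add_one _
        rw [le_div_iff₀ hzp, show (x - 1 / zf g h N) * zf g h N = x * zf g h N - 1 from by
          field_simp]
        linarith
      have hup : ∀ᶠ N in atTop,
          2 * (Kf g h x N : ℝ) / zf g h N ≤ x + 1 / zf g h N := by
        filter_upwards [eventually_ge_atTop 1] with N hN
        have hzp := hzpos N hN
        have hK : (Kf g h x N : ℝ) ≤ (x * zf g h N + 1) / 2 := by
          unfold Kf; exact Nat.floor_le (by positivity)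
        rw [div_le_iff₀ hzp, show (x + 1 / zf g h N) * zf g h N = x * zf g h N + 1 from by
          field_simp]
        linarith
      have l1 : Tendsto (fun N => x - 1 / zf g h N) atTop (nhds x) := by
        simpa using tendsto_const_nhds.sub hzinv
      have l2 : Tendsto (fun N => x + 1 / zf g h N) atTop (nhds x) := by
        simpa using tendsto_const_nhds.add hzinv
      exact tendsto_of_tendsto_of_tendsto_of_le_of_le' l1 l2 hlow hup
    have hsinv : Tendsto (fun N => 1 / sf g h N) atTop (nhds 0) := by
      have := h1'.inv_tendsto_atTop; simp only [one_div]; exact this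
    -- 2K/N → 0
    have hKN : Tendsto (fun N => 2 * (Kf g h x N : ℝ) / N) atTop (nhds 0) := by
      have l3 : Tendsto (fun N => 2 / sf g h N) atTop (nhds 0) := by
        have := hsinv.const_mul (2:ℝ)
        simpa [div_eq_mul_inv] using this
      have l4 := hKz.mul l3
      rw [mul_zero] at l4
      refine l4.congr' ?_
      filter_upwards [eventually_ge_atTop 1] with N hN
      have hN0 : (N:ℝ) ≠ 0 := by positivity
      have hsne := (hs0 N).ne'
      unfold zf
      field_simp
    -- A → 1
    have hhalf : ∀ᶠ N in atTop, 2 * (Kf g h x N : ℝ) / N < 1/2 :=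
      hKN.eventually_lt_const (by norm_num)
    have hA : Tendsto (fun N : ℕ => (N:ℝ) / ((N:ℝ) - 2 * (Kf g h x N : ℝ))) atTop (nhds 1) := by
      have l5 : Tendsto (fun N => (1 - 2 * (Kf g h x N : ℝ) / N)⁻¹) atTop (nhds 1) := by
        have := (tendsto_const_nhds.sub hKN).inv₀ (by norm_num : (1:ℝ) - 0 ≠ 0)
        simpa using this
      refine l5.congr' ?_
      filter_upwards [eventually_ge_atTop 1, hhalf] with N hN hhf
      have hN0 : (0:ℝ) < N := by exact_mod_cast hN
      have hKlt : 2 * (Kf g h x N : ℝ) < N / 2 := by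
        rw [div_lt_iff₀ hN0] at hhf; linarith
      have hne : (N:ℝ) - 2 * Kf g h x N ≠ 0 := by
        have hKr : (0:ℝ) ≤ (Kf g h x N : ℝ) := Nat.cast_nonneg _
        have : (0:ℝ) < (N:ℝ) - 2 * Kf g h x N := by linarith
        exact this.ne'
      have key : (1 : ℝ) - 2 * (Kf g h x N : ℝ) / N
          = ((N:ℝ) - 2 * (Kf g h x N : ℝ)) / ((N:ℝ)) := by field_simp
      rw [key, inv_div]
    -- 2K + 2 ≤ N eventually
    have hKn2 : ∀ᶠ N in atTop, (2 * (Kf g h x N : ℝ) + 2) ≤ N := by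
      have l6 : Tendsto (fun N => 2 * (Kf g h x N : ℝ) / N + 2 / N) atTop (nhds 0) := by
        have hN2 : Tendsto (fun N : ℕ => 2 / (N:ℝ)) atTop (nhds 0) := by
          have := (tendsto_natCast_atTop_atTop (R := ℝ)).inv_tendsto_atTop.const_mul (2:ℝ)
          simpa [div_eq_mul_inv] using this
        simpa using hKN.add hN2
      filter_upwards [eventually_ge_atTop 1, l6.eventually_lt_const (by norm_num : (0:ℝ) < 1)]
        with N hN hlt
      have hN0 : (0:ℝ) < N := by exact_mod_cast hN
      rw [← add_div, div_lt_one hN0] at hlt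
      linarith
    -- ε → 0
    have hEps : Tendsto (epsf g h x) atTop (nhds 0) := by
      have l7 := h2'.mul hA
      rw [zero_mul] at l7
      refine l7.congr' ?_
      filter_upwards [eventually_ge_atTop 1, hKn2] with N hN hK2
      have hN0 : (N:ℝ) ≠ 0 := by positivity
      have hne : (N:ℝ) - 2 * Kf g h x N ≠ 0 := by
        have : (2:ℝ) ≤ (N:ℝ) - 2 * Kf g h x N := by linarith
        linarith
      unfold epsf
      field_simp
    have hEpsPos : ∀ᶠ N in atTop, 0 < epsf g h x N := by
      filter_upwards [hKn2] with N hK2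
      unfold epsf
      have hKr : (0:ℝ) ≤ (Kf g h x N : ℝ) := Nat.cast_nonneg _
      exact div_pos (hs0 N) (by linarith)
    have hLam : Tendsto (lamf g h x) atTop (nhds 1) := by
      unfold lamf
      exact lim_neg_log hEps (hEpsPos.mono fun N hp => hp.ne')
    -- (s-1)/s → 1 and s/(s-1) → 1
    have hs1' : Tendsto (fun N => (sf g h N - 1) / sf g h N) atTop (nhds 1) := by
      have l8 : Tendsto (fun N => 1 - 1 / sf g h N) atTop (nhds 1) := by
        simpa using tendsto_const_nhds.sub hsinv
      refine l8.congr fun N => ?_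
      rw [one_sub_div (hs0 N).ne']
    have hsRatio : Tendsto (fun N => sf g h N / (sf g h N - 1)) atTop (nhds 1) := by
      have := hs1'.inv₀ one_ne_zero
      rw [inv_one] at this
      exact this.congr fun N => by rw [inv_div]
    -- cU facts
    have hcU0 : ∀ᶠ N in atTop, 0 < (sf g h N - 1) / (N:ℝ) := by
      filter_upwards [eventually_ge_atTop 1] with N hN
      have hN0 : (0:ℝ) < N := by exact_mod_cast hN
      exact div_pos (by linarith [hs2 N]) hN0
    have hcU : Tendsto (fun N => (sf g h N - 1) / (N:ℝ)) atTop (nhds 0) := by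
      apply tendsto_of_tendsto_of_tendsto_of_le_of_le' tendsto_const_nhds h2'
      · filter_upwards [hcU0] with N hp; exact hp.le
      · filter_upwards [eventually_ge_atTop 1] with N hN
        have hN0 : (0:ℝ) < N := by exact_mod_cast hN
        apply div_le_div_of_nonneg_right ?_ hN0.le
        linarith
    have hcUK : Tendsto (fun N => (sf g h N - 1) / (N:ℝ) * (Kf g h x N : ℝ)) atTop (nhds x) := by
      have l9 := hs1'.mul hKz
      rw [one_mul] at l9
      refine l9.congr' ?_
      filter_upwards [eventually_ge_atTop 1] with N hN
      have hN0 : (N:ℝ) ≠ 0 := by positivity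
      have hsne := (hs0 N).ne'
      unfold zf
      field_simp
    -- cL facts
    have hcL : Tendsto (fun N => lamf g h x N * ((sf g h N - 1) / ((N:ℝ) - 2 * Kf g h x N)))
        atTop (nhds 0) := by
      have l10 := hLam.mul (hs1'.mul hEps)
      rw [mul_zero, one_mul] at l10
      refine l10.congr' ?_
      filter_upwards [hKn2] with N hK2
      have hne : (N:ℝ) - 2 * Kf g h x N ≠ 0 := by
        have hKr : (0:ℝ) ≤ (Kf g h x N : ℝ) := Nat.cast_nonneg _
        have : (0:ℝ) < (N:ℝ) - 2 * Kf g h x N := by linarith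
        exact this.ne'
      have hsne := (hs0 N).ne'
      unfold epsf
      congr 1
      field_simp
    have hcLpos : ∀ᶠ N in atTop,
        0 < lamf g h x N * ((sf g h N - 1) / ((N:ℝ) - 2 * Kf g h x N)) := by
      filter_upwards [hKn2, hLam.eventually_const_lt (by norm_num : (0:ℝ) < 1)] with N hK2 hlp
      have hKr : (0:ℝ) ≤ (Kf g h x N : ℝ) := Nat.cast_nonneg _
      exact mul_pos hlp (div_pos (by linarith [hs2 N]) (by linarith))
    have hcLK : Tendsto (fun N =>
        lamf g h x N * ((sf g h N - 1) / ((N:ℝ) - 2 * Kf g h x N)) * (Kf g h x N : ℝ))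
        atTop (nhds x) := by
      have l11 := hLam.mul ((hs1'.mul hA).mul hKz)
      rw [one_mul, one_mul, one_mul] at l11
      refine l11.congr' ?_
      filter_upwards [eventually_ge_atTop 1, hKn2] with N hN hK2
      have hN0 : (N:ℝ) ≠ 0 := by positivity
      have hKr : (0:ℝ) ≤ (Kf g h x N : ℝ) := Nat.cast_nonneg _
      have hne : (N:ℝ) - 2 * Kf g h x N ≠ 0 := by
        have : (0:ℝ) < (N:ℝ) - 2 * Kf g h x N := by linarith
        exact this.ne'
      have hsne := (hs0 N).ne'
      unfold zf
      field_simp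
    -- positivity of limit denominator piece
    have hL : 0 < 1 - Real.exp (-x) * (1 + x) := by
      have hlt := Real.add_one_lt_exp (ne_of_gt hx0)
      have he := Real.exp_pos x
      rw [Real.exp_neg x]
      have hmul : (Real.exp x)⁻¹ * (1 + x) < (Real.exp x)⁻¹ * Real.exp x :=
        mul_lt_mul_of_pos_left (by linarith) (by positivity)
      rw [inv_mul_cancel₀ he.ne'] at hmul
      linarith
    have hUp : Tendsto (fun N => ((sf g h N - 1) / (N:ℝ)) ^ 2 *
        ∑ k ∈ Finset.range (Kf g h x N),
          (2*(k:ℝ)+1) * Real.exp (-((sf g h N - 1) / (N:ℝ))) ^ k)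
        atTop (nhds (2 * (1 - Real.exp (-x) * (1 + x)))) :=
      coreA x (Kf g h x) (fun N => (sf g h N - 1) / (N:ℝ)) hcU0 hcU hcUK
    have hLow : Tendsto (fun N =>
        (lamf g h x N * ((sf g h N - 1) / ((N:ℝ) - 2 * Kf g h x N))) ^ 2 *
        ∑ k ∈ Finset.range (Kf g h x N),
          (2*(k:ℝ)+1) * Real.exp (-(lamf g h x N *
            ((sf g h N - 1) / ((N:ℝ) - 2 * Kf g h x N)))) ^ k)
        atTop (nhds (2 * (1 - Real.exp (-x) * (1 + x)))) :=
      coreA x (Kf g h x)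
        (fun N => lamf g h x N * ((sf g h N - 1) / ((N:ℝ) - 2 * Kf g h x N)))
        hcLpos hcL hcLK
    -- upper comparison sequence tends to 1
    have hUpSeq : Tendsto (fun N =>
        ((g N : ℝ) * h N / (N : ℝ) ^ 2) * ((N : ℝ) / ((N : ℝ) - 2 * Kf g h x N)) *
          (∑ k ∈ Finset.range (Kf g h x N),
            (2 * (k : ℝ) + 1) * Real.exp (-((sf g h N - 1) / (N : ℝ))) ^ k) /
          ((2 * (g N : ℝ) * (h N : ℝ) / ((g N : ℝ) + (h N : ℝ)) ^ 2) *
            (1 - Real.exp (-x) * (1 + x)))) atTop (nhds 1) := by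
      have l12 := (hA.mul hUp).mul ((hsRatio.pow 2).mul_const
        (1 / (2 * (1 - Real.exp (-x) * (1 + x)))))
      have hval : 1 * (2 * (1 - Real.exp (-x) * (1 + x))) *
          (1 ^ 2 * (1 / (2 * (1 - Real.exp (-x) * (1 + x))))) = 1 := by
        field_simp
      rw [hval] at l12
      refine l12.congr' ?_
      filter_upwards [eventually_ge_atTop 1, hKn2] with N hN hK2
      have hN0 : (N:ℝ) ≠ 0 := by positivity
      have hKr : (0:ℝ) ≤ (Kf g h x N : ℝ) := Nat.cast_nonneg _
      have hne : (N:ℝ) - 2 * Kf g h x N ≠ 0 := by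
        have : (0:ℝ) < (N:ℝ) - 2 * Kf g h x N := by linarith
        exact this.ne'
      have hsne := (hs0 N).ne'
      have hs1ne : sf g h N - 1 ≠ 0 := by have := hs2 N; intro hc; rw [sub_eq_zero] at hc; linarith
      have hGne : (g N : ℝ) ≠ 0 := by have := hgN N; linarith
      have hHne : (h N : ℝ) ≠ 0 := by have := hhN N; linarith
      have hSS : (g N : ℝ) + (h N : ℝ) = sf g h N := rfl
      rw [hSS]
      field_simp
    -- lower comparison sequence tends to 1
    have hLowSeq : Tendsto (fun N =>
        ((g N : ℝ) * h N / (N : ℝ) ^ 2) *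
          (∑ k ∈ Finset.range (Kf g h x N),
            (2 * (k : ℝ) + 1) *
              Real.exp (-(lamf g h x N * ((sf g h N - 1) / ((N : ℝ) - 2 * Kf g h x N)))) ^ k) /
          ((2 * (g N : ℝ) * (h N : ℝ) / ((g N : ℝ) + (h N : ℝ)) ^ 2) *
            (1 - Real.exp (-x) * (1 + x)))) atTop (nhds 1) := by
      have l13 := hLow.mul (((hsRatio.pow 2).mul ((hA.inv₀ one_ne_zero).pow 2)).mul
        (((hLam.inv₀ one_ne_zero).pow 2).mul_const
          (1 / (2 * (1 - Real.exp (-x) * (1 + x))))))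
      have hval : (2 * (1 - Real.exp (-x) * (1 + x))) *
          ((1 ^ 2 * ((1:ℝ)⁻¹) ^ 2) *
            (((1:ℝ)⁻¹) ^ 2 * (1 / (2 * (1 - Real.exp (-x) * (1 + x)))))) = 1 := by
        field_simp
      rw [hval] at l13
      refine l13.congr' ?_
      filter_upwards [eventually_ge_atTop 1, hKn2,
        hLam.eventually_const_lt (by norm_num : (1:ℝ)/2 < 1)] with N hN hK2 hlamb
      have hlamne : lamf g h x N ≠ 0 := by
        have : (0:ℝ) < lamf g h x N := by linarith
        exact this.ne'
      have hN0 : (N:ℝ) ≠ 0 := by positivity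
      have hKr : (0:ℝ) ≤ (Kf g h x N : ℝ) := Nat.cast_nonneg _
      have hne : (N:ℝ) - 2 * Kf g h x N ≠ 0 := by
        have : (0:ℝ) < (N:ℝ) - 2 * Kf g h x N := by linarith
        exact this.ne'
      have hsne := (hs0 N).ne'
      have hs1ne : sf g h N - 1 ≠ 0 := by have := hs2 N; intro hc; rw [sub_eq_zero] at hc; linarith
      have hGne : (g N : ℝ) ≠ 0 := by have := hgN N; linarith
      have hHne : (h N : ℝ) ≠ 0 := by have := hhN N; linarith
      have hSS : (g N : ℝ) + (h N : ℝ) = sf g h N := rfl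
      rw [hSS]
      field_simp
    -- final squeeze
    have hDL : ∀ N, 0 < (2 * (g N : ℝ) * (h N : ℝ) / ((g N : ℝ) + (h N : ℝ)) ^ 2) *
        (1 - Real.exp (-x) * (1 + x)) := fun N => by
      have hG := hgN N; have hH := hhN N
      apply mul_pos (div_pos (by nlinarith) (by positivity)) hL
    apply tendsto_of_tendsto_of_tendsto_of_le_of_le' hLowSeq hUpSeq
    · filter_upwards [hKn2, hEps.eventually_lt_const (by norm_num : (0:ℝ) < 1/2)]
        with N hK2 hEh
      rw [RsoN_eq]
      exact div_le_div_of_nonneg_right ((sum_bounds g h hg hh x N hK2 hEh.le).1) (hDL N).le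
    · filter_upwards [hKn2, hEps.eventually_lt_const (by norm_num : (0:ℝ) < 1/2)]
        with N hK2 hEh
      rw [RsoN_eq]
      exact div_le_div_of_nonneg_right ((sum_bounds g h hg hh x N hK2 hEh.le).2) (hDL N).le
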